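/- Suppose F : ℝ → ℝ is continuously differentiable, p is a strict local minimum of F with F'(p) = 0, and F' < 0 on (a, p), F' > 0 on (p, b). Then for any initial point x₀ ∈ (a, b), the gradient flow x'(t) = -F'(x(t)) with x(0) = x₀ converges to p as t → ∞. -/

import Mathlib

open Set Filter

/-- Invariance: the flow starting at `x₀ ∈ [p, b)` stays in `[p, x₀]`. -/
lemma gf_invariant (F : ℝ → ℝ) (a b p : ℝ) (hap : a < p)
    (hneg : ∀ y ∈ Set.Ioo a p, deriv F y < 0)
    (hpos : ∀ y ∈ Set.Ioo p b, 0 < deriv F y)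
    (x₀ : ℝ) (hx₀ : x₀ ∈ Set.Ico p b)
    (x : ℝ → ℝ) (hx0 : x 0 = x₀)
    (hode : ∀ t : ℝ, 0 ≤ t → HasDerivAt x (-(deriv F (x t))) t) :
    ∀ t, 0 ≤ t → x t ∈ Set.Icc p x₀ := by
  intro s hs
  by_contra hbad
  have hcont : ∀ t, 0 ≤ t → ContinuousAt x t := fun t ht => (hode t ht).continuousAt
  have hcontOn : ∀ u v : ℝ, 0 ≤ u → ContinuousOn x (Icc u v) :=
    fun u v hu t ht => (hcont t (hu.trans ht.1)).continuousWithinAt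
  set K : Set ℝ := Icc 0 s ∩ x ⁻¹' (Icc p x₀) with hK
  have h0K : (0:ℝ) ∈ K := ⟨⟨le_refl 0, hs⟩, by simp [hx0, hx₀.1]⟩
  have hKcl : IsClosed K :=
    (hcontOn 0 s le_rfl).preimage_isClosed_of_isClosed isClosed_Icc isClosed_Icc
  have hKcp : IsCompact K := (isCompact_Icc).of_isClosed_subset hKcl inter_subset_left
  set T := sSup K with hT
  have hTK : T ∈ K := hKcp.sSup_mem ⟨0, h0K⟩
  have hT0 : 0 ≤ T := hTK.1.1
  have hTs : T ≤ s := hTK.1.2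
  have hTne : T ≠ s := fun h => hbad (h ▸ hTK.2)
  have hTlt : T < s := lt_of_le_of_ne hTs hTne
  have hout : ∀ t, t ∈ Ioc T s → x t ∉ Icc p x₀ := by
    intro t ht hmem
    exact absurd (le_csSup hKcp.bddAbove ⟨⟨hT0.trans ht.1.le, ht.2⟩, hmem⟩) (not_le.mpr ht.1)
  have hxs : x s ∉ Icc p x₀ := hout s ⟨hTlt, le_rfl⟩
  rcases lt_or_ge (x s) p with hxs' | hge
  · -- x s < p : flow would have to cross into (a,p), where it is increasing
    have hlow : ∀ t, t ∈ Ioc T s → x t < p := by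
      intro t ht
      by_contra hge
      push_neg at hge
      have hgt : x₀ < x t := by
        rcases lt_or_ge x₀ (x t) with h | h
        · exact h
        · exact absurd ⟨hge, h⟩ (hout t ht)
      have : p ∈ x '' Icc t s := by
        have : p ∈ Icc (x s) (x t) := ⟨hxs'.le, hge⟩
        have := intermediate_value_Icc' ht.2 (hcontOn t s (hT0.trans ht.1.le)) this
        exact this
      obtain ⟨u, hu, hxu⟩ := this
      exact hout u ⟨ht.1.trans_le hu.1, hu.2⟩ (by simp [hxu, hx₀.1, le_refl])
    have hxT : x T = p := by
      rcases eq_or_lt_of_le hTK.2.1 with h | h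
      · exact h.symm
      · -- x T > p, IVT gives a crossing in (T, s]
        have : p ∈ x '' Icc T s := by
          have := intermediate_value_Icc' hTs (hcontOn T s hT0) ⟨hxs'.le, h.le⟩
          exact this
        obtain ⟨u, hu, hxu⟩ := this
        have huT : T < u := by
          rcases eq_or_lt_of_le hu.1 with h' | h'
          · exfalso; rw [← h'] at hxu; rw [hxu] at h; exact lt_irrefl p h
          · exact h'
        exact absurd (hxu ▸ hlow u ⟨huT, hu.2⟩) (lt_irrefl p)
    -- near T the flow stays above a
    have hTa : a < x T := hxT ▸ hap
    obtain ⟨ε, hε, hball⟩ := Metric.eventually_nhds_iff.mp (continuousAt_const.eventually_lt (hcont T hT0) (by rw [hxT]; exact hap : a < x T))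
    set s' := min s (T + ε / 2) with hs'
    have hTs' : T < s' := lt_min hTlt (by linarith)
    have hs's : s' ≤ s := min_le_left _ _
    have hmid : ∀ t, t ∈ Ioc T s' → x t ∈ Ioo a p := by
      intro t ht
      refine ⟨hball ?_, hlow t ⟨ht.1, ht.2.trans hs's⟩⟩
      have : t - T ≤ ε / 2 := by
        have := ht.2.trans (min_le_right _ _); linarith
      rw [Real.dist_eq, abs_of_pos (by linarith [ht.1] : (0:ℝ) < t - T)] at *
      · linarith
    have hmono : StrictMonoOn x (Icc T s') := by
      apply strictMonoOn_of_deriv_pos (convex_Icc T s') (hcontOn T s' hT0)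
      intro t ht
      rw [interior_Icc] at ht
      have hx' := (hode t (hT0.trans ht.1.le)).deriv
      rw [hx']
      have := hneg (x t) (hmid t ⟨ht.1, ht.2.le⟩)
      linarith
    have := hmono ⟨le_rfl, hTs'.le⟩ ⟨hTs'.le, le_rfl⟩ hTs'
    have := (hmid s' ⟨hTs', le_rfl⟩).2
    rw [hxT] at *
    linarith
  · -- x s > x₀ : flow crosses above x₀, where it is decreasing
    have hxs' : x₀ < x s := lt_of_not_ge fun h => hxs ⟨hge, h⟩
    have hhigh : ∀ t, t ∈ Ioc T s → x₀ < x t := by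
      intro t ht
      by_contra hge
      push_neg at hge
      have hlt : x t < p := by
        rcases lt_or_ge (x t) p with h | h
        · exact h
        · exact absurd ⟨h, hge⟩ (hout t ht)
      have : x₀ ∈ x '' Icc t s := by
        have := intermediate_value_Icc ht.2 (hcontOn t s (hT0.trans ht.1.le)) ⟨hge, hxs'.le⟩
        exact this
      obtain ⟨u, hu, hxu⟩ := this
      exact hout u ⟨ht.1.trans_le hu.1, hu.2⟩ (by simp [hxu, hx₀.1, le_refl])
    have hxT : x T = x₀ := by
      rcases eq_or_lt_of_le hTK.2.2 with h | h
      · exact h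
      · have : x₀ ∈ x '' Icc T s := by
          have := intermediate_value_Icc hTs (hcontOn T s hT0) ⟨h.le, hxs'.le⟩
          exact this
        obtain ⟨u, hu, hxu⟩ := this
        have huT : T < u := by
          rcases eq_or_lt_of_le hu.1 with h' | h'
          · exfalso; rw [← h'] at hxu; rw [hxu] at h; exact lt_irrefl x₀ h
          · exact h'
        exact absurd (hxu ▸ hhigh u ⟨huT, hu.2⟩) (lt_irrefl x₀)
    obtain ⟨ε, hε, hball⟩ := Metric.eventually_nhds_iff.mp ((hcont T hT0).eventually_lt continuousAt_const (by rw [hxT]; exact hx₀.2 : x T < b))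
    set s' := min s (T + ε / 2) with hs'
    have hTs' : T < s' := lt_min hTlt (by linarith)
    have hs's : s' ≤ s := min_le_left _ _
    have hmid : ∀ t, t ∈ Ioc T s' → x t ∈ Ioo p b := by
      intro t ht
      refine ⟨hx₀.1.trans_lt (hhigh t ⟨ht.1, ht.2.trans hs's⟩), hball ?_⟩
      have h2' : t - T ≤ ε / 2 := by
        have := ht.2.trans (min_le_right _ _); linarith
      rw [Real.dist_eq, abs_of_pos (by linarith [ht.1] : (0:ℝ) < t - T)]
      linarith
    have hmono : StrictAntiOn x (Icc T s') := by
      apply strictAntiOn_of_deriv_neg (convex_Icc T s') (hcontOn T s' hT0)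
      intro t ht
      rw [interior_Icc] at ht
      rw [(hode t (hT0.trans ht.1.le)).deriv]
      have := hpos (x t) (hmid t ⟨ht.1, ht.2.le⟩)
      linarith
    have := hmono ⟨le_rfl, hTs'.le⟩ ⟨hTs'.le, le_rfl⟩ hTs'
    have := hhigh s' ⟨hTs', hs's⟩
    rw [hxT] at *
    linarith

/-- Key half-sided lemma: starting in `[p, b)`, the flow converges to `p`. -/
lemma gf_key (F : ℝ → ℝ) (hF : ContDiff ℝ 1 F) (a b p : ℝ) (hap : a < p) (hpb : p < b)
    (hp : deriv F p = 0)
    (hneg : ∀ y ∈ Set.Ioo a p, deriv F y < 0)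
    (hpos : ∀ y ∈ Set.Ioo p b, 0 < deriv F y)
    (x₀ : ℝ) (hx₀ : x₀ ∈ Set.Ico p b)
    (x : ℝ → ℝ) (hx0 : x 0 = x₀)
    (hode : ∀ t : ℝ, 0 ≤ t → HasDerivAt x (-(deriv F (x t))) t) :
    Filter.Tendsto x Filter.atTop (nhds p) := by
  have hinv := gf_invariant F a b p hap hneg hpos x₀ hx₀ x hx0 hode
  have hcont : ∀ t, 0 ≤ t → ContinuousAt x t := fun t ht => (hode t ht).continuousAt
  have hFderiv : ∀ z ∈ Icc p x₀, 0 ≤ deriv F z := by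
    intro z hz
    rcases eq_or_lt_of_le hz.1 with h | h
    · rw [← h, hp]
    · exact (hpos z ⟨h, lt_of_le_of_lt hz.2 hx₀.2⟩).le
  -- x is antitone on [0, ∞)
  have hanti : AntitoneOn x (Ici 0) := by
    apply antitoneOn_of_deriv_nonpos (convex_Ici 0)
      (fun t ht => (hcont t ht).continuousWithinAt)
    · intro t ht
      rw [interior_Ici] at ht
      exact (hode t ht.le).differentiableAt.differentiableWithinAt
    · intro t ht
      rw [interior_Ici] at ht
      rw [(hode t ht.le).deriv]
      have := hFderiv (x t) (hinv t ht.le)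
      linarith
  set y : ℝ → ℝ := fun t => x (max t 0) with hy
  have hyx : ∀ t, 0 ≤ t → y t = x t := fun t ht => by simp [hy, max_eq_left ht]
  have hyanti : Antitone y := by
    intro u v huv
    exact hanti (by simp : max u 0 ∈ Ici 0) (by simp : max v 0 ∈ Ici 0)
      (max_le_max huv le_rfl)
  have hymem : ∀ t, y t ∈ Icc p x₀ := fun t => hinv (max t 0) (le_max_right _ _)
  have hbdd : BddBelow (range y) := ⟨p, fun z ⟨t, ht⟩ => ht ▸ (hymem t).1⟩
  have htend : Tendsto y atTop (nhds (⨅ t, y t)) := tendsto_atTop_ciInf hyanti hbdd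
  set L := ⨅ t, y t with hL
  have hpL : p ≤ L := le_ciInf fun t => (hymem t).1
  have hLy : ∀ t, L ≤ y t := fun t => ciInf_le hbdd t
  have hLx₀ : L ≤ x₀ := by
    have := hLy 0
    simpa [hy, hx0] using this
  have hLp : L = p := by
    by_contra hne
    have hpltL : p < L := lt_of_le_of_ne hpL (Ne.symm hne)
    -- deriv F has a positive min on [L, x₀]
    have hsub : Icc L x₀ ⊆ Ioo p b := fun z hz => ⟨hpltL.trans_le hz.1, lt_of_le_of_lt hz.2 hx₀.2⟩
    have hFc : ContinuousOn (deriv F) (Icc L x₀) :=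
      ((hF.continuous_deriv le_rfl).continuousOn)
    obtain ⟨m, hm, hmin⟩ := (isCompact_Icc).exists_isMinOn ⟨L, ⟨le_rfl, hLx₀⟩⟩ hFc
    set c := deriv F m with hc
    have hcpos : 0 < c := hpos m (hsub hm)
    have hcle : ∀ z ∈ Icc L x₀, c ≤ deriv F z := fun z hz => hmin hz
    -- g t = x t + c * t is antitone on [0, ∞)
    have hxmem : ∀ t, 0 ≤ t → x t ∈ Icc L x₀ := by
      intro t ht
      exact ⟨(hyx t ht) ▸ hLy t, (hinv t ht).2⟩
    have hganti : AntitoneOn (fun t => x t + c * t) (Ici 0) := by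
      apply antitoneOn_of_deriv_nonpos (convex_Ici 0)
      · intro t ht
        exact ((hcont t ht).add (continuous_const.mul continuous_id).continuousAt).continuousWithinAt
      · intro t ht
        rw [interior_Ici] at ht
        exact ((hode t ht.le).add ((hasDerivAt_id t).const_mul c)).differentiableAt.differentiableWithinAt
      · intro t ht
        rw [interior_Ici] at ht
        have hd : HasDerivAt (fun t => x t + c * t) (-(deriv F (x t)) + c * 1) t :=
          (hode t ht.le).add ((hasDerivAt_id t).const_mul c)
        rw [hd.deriv]
        have := hcle (x t) (hxmem t ht.le)
        linarith
    set τ := (x₀ - p) / c + 1 with hτ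
    have hτpos : (0:ℝ) < τ := by
      have h1 : 0 ≤ (x₀ - p) / c := div_nonneg (by linarith [hx₀.1]) hcpos.le
      rw [hτ]; linarith
    have := hganti (by simp : (0:ℝ) ∈ Ici 0) (le_of_lt hτpos) hτpos.le
    have hxτ : x τ + c * τ ≤ x₀ := by simpa [hx0] using this
    have hcτ : c * τ = (x₀ - p) + c := by
      rw [hτ]; field_simp
    have hxτp : p ≤ x τ := (hinv τ hτpos.le).1
    rw [hcτ] at hxτ
    linarith
  have : Tendsto y atTop (nhds p) := hLp ▸ htend
  refine this.congr' ?_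
  filter_upwards [eventually_ge_atTop (0:ℝ)] with t ht
  exact hyx t ht

theorem gradient_flow_converges
    (F : ℝ → ℝ) (hF : ContDiff ℝ 1 F) (a b p : ℝ) (hap : a < p) (hpb : p < b)
    (hp : deriv F p = 0)
    (hstrict : ∀ᶠ y in nhdsWithin p {p}ᶜ, F p < F y)
    (hneg : ∀ y ∈ Set.Ioo a p, deriv F y < 0)
    (hpos : ∀ y ∈ Set.Ioo p b, 0 < deriv F y)
    (x₀ : ℝ) (hx₀ : x₀ ∈ Set.Ioo a b)
    (x : ℝ → ℝ) (hx0 : x 0 = x₀)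
    (hode : ∀ t : ℝ, 0 ≤ t → HasDerivAt x (-(deriv F (x t))) t) :
    Filter.Tendsto x Filter.atTop (nhds p) := by
  rcases le_or_gt p x₀ with hpx | hxp
  · exact gf_key F hF a b p hap hpb hp hneg hpos x₀ ⟨hpx, hx₀.2⟩ x hx0 hode
  · -- reflect: G y = F (2p - y), x̃ t = 2p - x t
    set G : ℝ → ℝ := fun y => F (2 * p - y) with hG
    have hGc : ContDiff ℝ 1 G := hF.comp (contDiff_const.sub contDiff_id)
    have hFd : Differentiable ℝ F := hF.differentiable one_ne_zero
    have hGd : ∀ y, HasDerivAt G (-(deriv F (2 * p - y))) y := by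
      intro y
      have h1 : HasDerivAt (fun y : ℝ => 2 * p - y) (-1) y := by
        simpa using (hasDerivAt_id' y).const_sub (2*p)
      have h2 := ((hFd (2 * p - y)).hasDerivAt).comp y h1
      have h3 : HasDerivAt G (deriv F (2 * p - y) * (-1)) y := h2
      simpa using h3
    have hGderiv : ∀ y, deriv G y = -(deriv F (2 * p - y)) := fun y => (hGd y).deriv
    set z : ℝ → ℝ := fun t => 2 * p - x t with hz
    have hzode : ∀ t : ℝ, 0 ≤ t → HasDerivAt z (-(deriv G (z t))) t := by
      intro t ht
      have := (hasDerivAt_const t (2*p)).sub (hode t ht)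
      have heq : -(deriv G (z t)) = 0 - -(deriv F (x t)) := by
        rw [hGderiv]
        simp [hz]
      rw [heq]
      exact this
    have hzkey := gf_key G hGc (2*p - b) (2*p - a) p (by linarith) (by linarith)
      (by rw [hGderiv, show 2*p - p = p by ring, hp, neg_zero])
      (by intro y hy
          rw [hGderiv]
          have : 2 * p - y ∈ Set.Ioo p b := ⟨by linarith [hy.2], by linarith [hy.1]⟩
          linarith [hpos _ this])
      (by intro y hy
          rw [hGderiv]
          have : 2 * p - y ∈ Set.Ioo a p := ⟨by linarith [hy.2], by linarith [hy.1]⟩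
          linarith [hneg _ this])
      (2 * p - x₀) ⟨by linarith, by linarith [hx₀.1]⟩ z (by simp [hz, hx0]) hzode
    have : Tendsto (fun t => 2 * p - z t) atTop (nhds (2 * p - p)) :=
      (tendsto_const_nhds).sub hzkey
    have heq : (fun t => 2 * p - z t) = x := by
      funext t; simp [hz]
    rw [heq] at this
    convert this using 2
    ring
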